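/- Let x and y be nonempty strings over an alphabet Σ, and let M be a best possible match between x and y (a match of maximal cardinality). Suppose x = x₁x₂⋯xₙ and y = y₁y₂⋯yₙ are decompositions of x and y into consecutive (possibly empty) substrings that correspond under M, meaning that for every pair in M, the x-index lies in the segment xᵢ if and only if the y-index lies in the segment yᵢ. Then f̄(x,y) = Σᵢ₌₁ⁿ f̄(xᵢ,yᵢ)·vᵢ, where vᵢ = (|xᵢ| + |yᵢ|)/(|x| + |y|) and where for segments with |xᵢ| + |yᵢ| > 0 the quantity f̄(xᵢ,yᵢ) is given by the defining formula of the f̄-distance (and terms with |xᵢ| + |yᵢ| = 0 are omitted). -/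

import Mathlib

/-- A match between two strings `a` and `b`: a finite set of pairs of (0-based) indices,
strictly increasing in both coordinates simultaneously, matching equal symbols. -/
def IsMatch {α : Type*} (a b : List α) (M : Finset (ℕ × ℕ)) : Prop :=
  (∀ p ∈ M, p.1 < a.length ∧ p.2 < b.length ∧ a[p.1]? = b[p.2]?) ∧
  (∀ p ∈ M, ∀ q ∈ M, (p.1 < q.1 ↔ p.2 < q.2))

/-- The maximal cardinality of a match between `a` and `b`. -/
noncomputable def maxMatch {α : Type*} (a b : List α) : ℕ :=
  sSup {r : ℕ | ∃ M : Finset (ℕ × ℕ), IsMatch a b M ∧ M.card = r}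

/-- The `f̄` distance between two strings:
`f̄(a,b) = 1 - 2 · max{|M| : M a match between a and b} / (|a| + |b|)`. -/
noncomputable def fbar {α : Type*} (a b : List α) : ℝ :=
  1 - 2 * (maxMatch a b : ℝ) / ((a.length : ℝ) + (b.length : ℝ))

section Aux

variable {α : Type*}

lemma match_card_le (a b : List α) (M : Finset (ℕ × ℕ)) (h : IsMatch a b M) :
    M.card ≤ a.length := by
  classical
  have hinj : Set.InjOn Prod.fst (M : Set (ℕ × ℕ)) := by
    intro p hp q hq hpq
    have h1 := h.2 p hp q hq
    have h2 := h.2 q hq p hp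
    have : p.2 = q.2 := by omega
    exact Prod.ext hpq this
  calc M.card = (M.image Prod.fst).card := (Finset.card_image_of_injOn hinj).symm
    _ ≤ (Finset.range a.length).card := by
        apply Finset.card_le_card
        intro i hi
        simp only [Finset.mem_image] at hi
        obtain ⟨p, hp, rfl⟩ := hi
        exact Finset.mem_range.2 (h.1 p hp).1
    _ = a.length := Finset.card_range _

lemma bddAbove_matchSet (a b : List α) :
    BddAbove {r : ℕ | ∃ M : Finset (ℕ × ℕ), IsMatch a b M ∧ M.card = r} :=
  ⟨a.length, fun r ⟨M, hM, hc⟩ => hc ▸ match_card_le a b M hM⟩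

lemma isMatch_empty (a b : List α) : IsMatch a b (∅ : Finset (ℕ × ℕ)) := by
  constructor <;> intro p hp <;> simp at hp

lemma le_maxMatch {a b : List α} {M : Finset (ℕ × ℕ)} (h : IsMatch a b M) :
    M.card ≤ maxMatch a b :=
  le_csSup (bddAbove_matchSet a b) ⟨M, h, rfl⟩

lemma exists_maxMatch (a b : List α) :
    ∃ M : Finset (ℕ × ℕ), IsMatch a b M ∧ M.card = maxMatch a b :=
  Nat.sSup_mem ⟨0, Set.mem_setOf.2 ⟨∅, isMatch_empty a b, rfl⟩⟩ (bddAbove_matchSet a b)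

lemma maxMatch_eq_card {x y : List α} {M : Finset (ℕ × ℕ)} (hM : IsMatch x y M)
    (hbest : ∀ M' : Finset (ℕ × ℕ), IsMatch x y M' → M'.card ≤ M.card) :
    maxMatch x y = M.card := by
  refine le_antisymm (csSup_le ⟨0, ∅, isMatch_empty x y, rfl⟩ ?_) (le_maxMatch hM)
  rintro r ⟨M', hM', rfl⟩
  exact hbest M' hM'

/-- offset of block `k` -/
def off (xs : List (List α)) (k : ℕ) : ℕ := ((xs.take k).flatten).length

lemma off_succ {xs : List (List α)} {k : ℕ} (hk : k < xs.length) :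
    off xs (k + 1) = off xs k + (xs.getD k []).length := by
  unfold off
  rw [List.take_succ, List.flatten_append, List.length_append]
  congr 1
  have : xs[k]? = some xs[k] := List.getElem?_eq_getElem hk
  simp [this, List.getD_eq_getElem?_getD]

lemma off_le_succ (xs : List (List α)) (k : ℕ) : off xs k ≤ off xs (k + 1) := by
  rcases lt_or_ge k xs.length with hk | hk
  · rw [off_succ hk]; omega
  · unfold off
    rw [List.take_of_length_le hk, List.take_of_length_le (by omega)]

lemma off_mono (xs : List (List α)) : Monotone (off xs) :=
  monotone_nat_of_le_succ (off_le_succ xs)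

lemma off_top (xs : List (List α)) : off xs xs.length = xs.flatten.length := by
  unfold off; rw [List.take_length]

lemma off_sum (xs : List (List α)) (n : ℕ) (hn : n ≤ xs.length) :
    off xs n = ∑ k ∈ Finset.range n, (xs.getD k []).length := by
  induction n with
  | zero => simp [off]
  | succ n ih =>
      rw [Finset.sum_range_succ, ← ih (by omega), off_succ (by omega)]

lemma getElem?_flatten_block (xs : List (List α)) {k i : ℕ} (hk : k < xs.length)
    (hi : i < (xs.getD k []).length) :
    xs.flatten[off xs k + i]? = (xs.getD k [])[i]? := by
  have hsplit : xs.flatten = (xs.take k).flatten ++ ((xs.getD k []) ++ (xs.drop (k + 1)).flatten) := by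
    conv_lhs => rw [← List.take_append_drop (k + 1) xs]
    rw [List.flatten_append, List.take_succ, List.flatten_append]
    have : xs[k]? = some xs[k] := List.getElem?_eq_getElem hk
    simp [this, List.getD_eq_getElem?_getD, List.append_assoc]
  rw [hsplit, List.getElem?_append_right (by unfold off; omega)]
  have : off xs k + i - ((xs.take k).flatten).length = i := by unfold off; omega
  rw [this, List.getElem?_append, if_pos hi]

lemma block_exists (xs : List (List α)) {j : ℕ} (n : ℕ) (hj : j < off xs n) :
    ∃ k < n, off xs k ≤ j ∧ j < off xs (k + 1) := by
  induction n with
  | zero => simp [off] at hj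
  | succ n ih =>
      rcases lt_or_ge j (off xs n) with h | h
      · obtain ⟨k, hk, h1, h2⟩ := ih h
        exact ⟨k, by omega, h1, h2⟩
      · exact ⟨n, by omega, h, hj⟩

end Aux

lemma maxMatch_le_length {α : Type*} (a b : List α) : maxMatch a b ≤ a.length := by
  refine csSup_le ⟨0, Set.mem_setOf.2 ⟨∅, isMatch_empty a b, rfl⟩⟩ ?_
  rintro r ⟨M, hM, rfl⟩
  exact match_card_le a b M hM


/-- If `x = x₁⋯xₙ` and `y = y₁⋯yₙ` are decompositions into corresponding substrings
under a best possible `f̄`-match, then `f̄(x,y) = Σᵢ f̄(xᵢ,yᵢ)·vᵢ` with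
`vᵢ = (|xᵢ|+|yᵢ|)/(|x|+|y|)` (terms with `|xᵢ|+|yᵢ| = 0` contribute `0`). -/
theorem fbar_substring_matching {α : Type*} (x y : List α) (hx : x ≠ []) (hy : y ≠ [])
    (M : Finset (ℕ × ℕ)) (hM : IsMatch x y M)
    (hbest : ∀ M' : Finset (ℕ × ℕ), IsMatch x y M' → M'.card ≤ M.card)
    (xs ys : List (List α)) (hlen : xs.length = ys.length)
    (hxj : x = xs.flatten) (hyj : y = ys.flatten)
    (hcorr : ∀ p ∈ M, ∀ k : ℕ,
      ((xs.take k).flatten.length ≤ p.1 ∧ p.1 < (xs.take (k + 1)).flatten.length) ↔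
      ((ys.take k).flatten.length ≤ p.2 ∧ p.2 < (ys.take (k + 1)).flatten.length)) :
    fbar x y = ∑ k ∈ Finset.range xs.length,
      fbar (xs.getD k []) (ys.getD k []) *
        (((xs.getD k []).length : ℝ) + ((ys.getD k []).length : ℝ)) /
          ((x.length : ℝ) + (y.length : ℝ)) := by
  classical
  set n := xs.length with hn
  have hny : ys.length = n := hlen.symm
  have hoXn : off xs n = x.length := by rw [off_top, hxj]
  have hoYn : off ys n = y.length := by rw [show n = ys.length from hny.symm, off_top, hyj]
  set m : ℕ → ℕ := fun k => maxMatch (xs.getD k []) (ys.getD k []) with hm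
  -- the block function
  set f : ℕ × ℕ → ℕ := fun p => Nat.findGreatest (fun k => off xs k ≤ p.1) n with hf
  have hblk : ∀ p ∈ M, f p < n ∧ off xs (f p) ≤ p.1 ∧ p.1 < off xs (f p + 1) := by
    intro p hp
    have hp1 : p.1 < off xs n := by rw [hoXn]; exact (hM.1 p hp).1
    have hspec : off xs (f p) ≤ p.1 :=
      Nat.findGreatest_spec (P := fun k => off xs k ≤ p.1) (Nat.zero_le n) (by simp [off])
    have hfn : f p ≤ n := Nat.findGreatest_le n
    have hlt : f p < n := by
      rcases eq_or_lt_of_le hfn with h | h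
      · exfalso; rw [h] at hspec; omega
      · exact h
    have hgr : ¬ (off xs (f p + 1) ≤ p.1) :=
      Nat.findGreatest_is_greatest (P := fun k => off xs k ≤ p.1)
        (Nat.lt_succ_self _) (by omega)
    exact ⟨hlt, hspec, by omega⟩
  -- upper bound : M.card ≤ ∑ m k
  have hMle : M.card ≤ ∑ k ∈ Finset.range n, m k := by
    rw [Finset.card_eq_sum_card_fiberwise (f := f) (t := Finset.range n)
      (fun p hp => Finset.mem_range.2 (hblk p hp).1)]
    apply Finset.sum_le_sum
    intro k hk
    rw [Finset.mem_range] at hk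
    have hky : k < ys.length := by omega
    have hmem : ∀ p ∈ M.filter (fun p => f p = k),
        off xs k ≤ p.1 ∧ p.1 < off xs (k+1) ∧ off ys k ≤ p.2 ∧ p.2 < off ys (k+1) ∧ p ∈ M := by
      intro p hp
      rw [Finset.mem_filter] at hp
      obtain ⟨hpM, hpf⟩ := hp
      have h1 := hblk p hpM
      rw [hpf] at h1
      have h2 := (hcorr p hpM k).1 ⟨h1.2.1, h1.2.2⟩
      exact ⟨h1.2.1, h1.2.2, h2.1, h2.2, hpM⟩
    set Mk := (M.filter (fun p => f p = k)).image
        (fun p => (p.1 - off xs k, p.2 - off ys k)) with hMkdef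
    have hcard : Mk.card = (M.filter (fun p => f p = k)).card := by
      apply Finset.card_image_of_injOn
      intro p hp q hq hpq
      obtain ⟨hp1, hp2, hp3, hp4, hpM⟩ := hmem p (Finset.mem_coe.1 hp)
      obtain ⟨hq1, hq2, hq3, hq4, hqM⟩ := hmem q (Finset.mem_coe.1 hq)
      obtain ⟨e1, e2⟩ := Prod.ext_iff.1 hpq
      simp only at e1 e2
      exact Prod.ext (by omega) (by omega)
    have hmatch : IsMatch (xs.getD k []) (ys.getD k []) Mk := by
      constructor
      · intro p' hp'
        rw [hMkdef, Finset.mem_image] at hp'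
        obtain ⟨p, hp, rfl⟩ := hp'
        obtain ⟨hp1, hp2, hp3, hp4, hpM⟩ := hmem p hp
        have hx1 : p.1 - off xs k < (xs.getD k []).length := by
          have := off_succ (xs := xs) (k := k) (by omega); omega
        have hy1 : p.2 - off ys k < (ys.getD k []).length := by
          have := off_succ (xs := ys) (k := k) hky; omega
        refine ⟨hx1, hy1, ?_⟩
        have e1 := getElem?_flatten_block xs (k := k) (i := p.1 - off xs k) (by omega) hx1
        have e2 := getElem?_flatten_block ys (k := k) (i := p.2 - off ys k) hky hy1
        rw [show off xs k + (p.1 - off xs k) = p.1 by omega] at e1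
        rw [show off ys k + (p.2 - off ys k) = p.2 by omega] at e2
        rw [← e1, ← e2, ← hxj, ← hyj]
        exact (hM.1 p hpM).2.2
      · intro p' hp' q' hq'
        rw [hMkdef, Finset.mem_image] at hp' hq'
        obtain ⟨p, hp, rfl⟩ := hp'
        obtain ⟨q, hq, rfl⟩ := hq'
        obtain ⟨hp1, hp2, hp3, hp4, hpM⟩ := hmem p hp
        obtain ⟨hq1, hq2, hq3, hq4, hqM⟩ := hmem q hq
        have := hM.2 p hpM q hqM
        simp only
        omega
    calc (M.filter (fun p => f p = k)).card = Mk.card := hcard.symm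
      _ ≤ m k := le_maxMatch hmatch
  -- lower bound
  choose N hN1 hN2 using fun k => exists_maxMatch (xs.getD k []) (ys.getD k [])
  set big := (Finset.range n).biUnion
      (fun k => (N k).image (fun p => (p.1 + off xs k, p.2 + off ys k))) with hbigdef
  have hbigmem : ∀ p' ∈ big, ∃ k, k < n ∧ ∃ p ∈ N k,
      p' = (p.1 + off xs k, p.2 + off ys k) := by
    intro p' hp'
    rw [hbigdef, Finset.mem_biUnion] at hp'
    obtain ⟨k, hk, hp'⟩ := hp'
    rw [Finset.mem_image] at hp'
    obtain ⟨p, hp, rfl⟩ := hp'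
    exact ⟨k, Finset.mem_range.1 hk, p, hp, rfl⟩
  have hbounds : ∀ k, k < n → ∀ p ∈ N k,
      off xs k ≤ p.1 + off xs k ∧ p.1 + off xs k < off xs (k+1) ∧
      off ys k ≤ p.2 + off ys k ∧ p.2 + off ys k < off ys (k+1) := by
    intro k hk p hp
    have h1 := (hN1 k).1 p hp
    have e1 := off_succ (xs := xs) (k := k) (by omega)
    have e2 := off_succ (xs := ys) (k := k) (by omega)
    omega
  have hmatchbig : IsMatch x y big := by
    constructor
    · intro p' hp'
      obtain ⟨k, hk, p, hp, rfl⟩ := hbigmem p' hp'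
      obtain ⟨b1, b2, b3, b4⟩ := hbounds k hk p hp
      have h1 := (hN1 k).1 p hp
      have hoxk : off xs (k+1) ≤ off xs n := off_mono xs (by omega)
      have hoyk : off ys (k+1) ≤ off ys n := off_mono ys (by omega)
      refine ⟨by simp only; omega, by simp only; omega, ?_⟩
      have e1 := getElem?_flatten_block xs (k := k) (i := p.1) (by omega) h1.1
      have e2 := getElem?_flatten_block ys (k := k) (i := p.2) (by omega) h1.2.1
      simp only
      rw [hxj, hyj, show p.1 + off xs k = off xs k + p.1 by omega,
        show p.2 + off ys k = off ys k + p.2 by omega, e1, e2]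
      exact h1.2.2
    · intro p' hp' q' hq'
      obtain ⟨k, hk, p, hp, rfl⟩ := hbigmem p' hp'
      obtain ⟨l, hl, q, hq, rfl⟩ := hbigmem q' hq'
      obtain ⟨b1, b2, b3, b4⟩ := hbounds k hk p hp
      obtain ⟨c1, c2, c3, c4⟩ := hbounds l hl q hq
      simp only
      rcases lt_trichotomy k l with hkl | hkl | hkl
      · have h1 : off xs (k+1) ≤ off xs l := off_mono xs (by omega)
        have h2 : off ys (k+1) ≤ off ys l := off_mono ys (by omega)
        omega
      · subst hkl
        have := (hN1 k).2 p hp q hq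
        omega
      · have h1 : off xs (l+1) ≤ off xs k := off_mono xs (by omega)
        have h2 : off ys (l+1) ≤ off ys k := off_mono ys (by omega)
        omega
  have hcardbig : big.card = ∑ k ∈ Finset.range n, m k := by
    rw [hbigdef, Finset.card_biUnion]
    · apply Finset.sum_congr rfl
      intro k hk
      rw [Finset.card_image_of_injOn, hN2 k]
      intro p _ q _ hpq
      obtain ⟨e1, e2⟩ := Prod.ext_iff.1 hpq
      simp only at e1 e2
      exact Prod.ext (by omega) (by omega)
    · intro k hk l hl hkl
      simp only [Function.onFun]
      rw [Finset.disjoint_left]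
      intro a ha hb
      rw [Finset.mem_image] at ha hb
      obtain ⟨p, hp, rfl⟩ := ha
      obtain ⟨q, hq, he⟩ := hb
      obtain ⟨b1, b2, b3, b4⟩ := hbounds k (Finset.mem_range.1 hk) p hp
      obtain ⟨c1, c2, c3, c4⟩ := hbounds l (Finset.mem_range.1 hl) q hq
      obtain ⟨e1, e2⟩ := Prod.ext_iff.1 he
      simp only at e1 e2
      rcases lt_or_gt_of_ne hkl with h | h
      · have := off_mono xs (show k + 1 ≤ l by omega); omega
      · have := off_mono xs (show l + 1 ≤ k by omega); omega
  have hMge : ∑ k ∈ Finset.range n, m k ≤ M.card := hcardbig ▸ hbest big hmatchbig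
  have hMsum : M.card = ∑ k ∈ Finset.range n, m k := le_antisymm hMle hMge
  -- arithmetic
  have hmax : maxMatch x y = M.card := maxMatch_eq_card hM hbest
  have hxpos : 0 < x.length := by
    cases x with
    | nil => exact absurd rfl hx
    | cons _ _ => simp
  have hL : (0:ℝ) < (x.length : ℝ) + (y.length : ℝ) := by
    have h1 : (1:ℝ) ≤ (x.length : ℝ) := by exact_mod_cast hxpos
    have h2 : (0:ℝ) ≤ (y.length : ℝ) := by positivity
    linarith
  have hLne : ((x.length : ℝ) + (y.length : ℝ)) ≠ 0 := ne_of_gt hL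
  have hsumx : x.length = ∑ k ∈ Finset.range n, (xs.getD k []).length := by
    rw [← hoXn, off_sum xs n le_rfl]
  have hsumy : y.length = ∑ k ∈ Finset.range n, (ys.getD k []).length := by
    rw [← hoYn, off_sum ys n (le_of_eq hny.symm)]
  have halg : ∀ (a b c L : ℝ), a + b ≠ 0 → (1 - 2*c/(a+b)) * (a+b) / L = (a+b-2*c)/L := by
    intro a b c L h
    field_simp
  have hterm : ∀ k ∈ Finset.range n,
      fbar (xs.getD k []) (ys.getD k []) *
        (((xs.getD k []).length : ℝ) + ((ys.getD k []).length : ℝ)) /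
          ((x.length : ℝ) + (y.length : ℝ))
      = (((xs.getD k []).length : ℝ) + ((ys.getD k []).length : ℝ) - 2 * (m k : ℝ)) /
          ((x.length : ℝ) + (y.length : ℝ)) := by
    intro k _
    rcases eq_or_ne (((xs.getD k []).length : ℝ) + ((ys.getD k []).length : ℝ)) 0 with h0 | h0
    · have hab : (xs.getD k []).length + (ys.getD k []).length = 0 := by exact_mod_cast h0
      have hm0 : m k = 0 := by
        have h1 := maxMatch_le_length (xs.getD k []) (ys.getD k [])
        show maxMatch (xs.getD k []) (ys.getD k []) = 0
        omega
      rw [h0, hm0]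
      simp
    · have hfb : fbar (xs.getD k []) (ys.getD k [])
          = 1 - 2 * (m k : ℝ) / (((xs.getD k []).length : ℝ) + ((ys.getD k []).length : ℝ)) := rfl
      rw [hfb, halg _ _ _ _ h0]
  have hfbx : fbar x y = 1 - 2 * ((M.card : ℕ) : ℝ) / ((x.length : ℝ) + (y.length : ℝ)) := by
    unfold fbar
    rw [hmax]
  have hsum : ∑ k ∈ Finset.range n,
      (((xs.getD k []).length : ℝ) + ((ys.getD k []).length : ℝ) - 2 * (m k : ℝ))
      = ((x.length : ℝ) + (y.length : ℝ)) - 2 * ((M.card : ℕ) : ℝ) := by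
    push_cast [hsumx, hsumy, hMsum]
    rw [Finset.sum_sub_distrib, Finset.sum_add_distrib, Finset.mul_sum]
  rw [Finset.sum_congr rfl hterm, ← Finset.sum_div, hsum, hfbx]
  field_simp
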